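/- Let n be a positive integer and let s, t be primes with n < s < t and s ≡ t (mod n). Then the set of coefficients of Φ_{ns}(x) equals the set of coefficients of Φ_{nt}(x). -/

import Mathlib

open Polynomial Finset

noncomputable def Rpoly (n : ℕ) : Polynomial ℤ :=
  (X ^ n - 1) /ₘ Polynomial.cyclotomic n ℤ

noncomputable def Gfun (n r u v : ℕ) : ℤ :=
  -∑ i ∈ Finset.range (n + 1),
    if i ≤ u then (Polynomial.cyclotomic n ℤ).coeff i *
      (Rpoly n).coeff (((u - i) * r + v) % n) else 0

lemma cyclo_mul_Rpoly (n : ℕ) :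
    Polynomial.cyclotomic n ℤ * Rpoly n = X ^ n - 1 := by
  have h := modByMonic_add_div (X ^ n - 1 : Polynomial ℤ) (cyclotomic n ℤ)
  rwa [(modByMonic_eq_zero_iff_dvd (cyclotomic.monic n ℤ)).mpr
    (cyclotomic.dvd_X_pow_sub_one n ℤ), zero_add] at h

lemma Rpoly_coeff_ge (n : ℕ) (hn : 0 < n) {l : ℕ} (hl : n ≤ l) :
    (Rpoly n).coeff l = 0 := by
  apply coeff_eq_zero_of_natDegree_lt
  have hC : (Polynomial.cyclotomic n ℤ) ≠ 0 := cyclotomic_ne_zero n ℤ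
  have hXdeg : (X ^ n - 1 : Polynomial ℤ).natDegree = n := by
    simpa using natDegree_X_pow_sub_C (R := ℤ) (n := n) (r := 1)
  have hX : (X ^ n - 1 : Polynomial ℤ) ≠ 0 := by
    intro h
    rw [h, natDegree_zero] at hXdeg
    omega
  have hR : Rpoly n ≠ 0 := by
    intro h
    rw [← cyclo_mul_Rpoly n, h, mul_zero] at hX
    exact hX rfl
  have hdeg := natDegree_mul hC hR
  rw [cyclo_mul_Rpoly n] at hdeg
  rw [hXdeg, natDegree_cyclotomic] at hdeg
  have := Nat.totient_pos.mpr hn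
  omega

lemma coeff_cyclo_gt (n : ℕ) {i : ℕ} (hi : n < i) :
    (Polynomial.cyclotomic n ℤ).coeff i = 0 := by
  apply coeff_eq_zero_of_natDegree_lt
  rw [natDegree_cyclotomic]
  exact lt_of_le_of_lt (Nat.totient_le n) hi

lemma coeff_E (n p : ℕ) (hn : 0 < n) (hp : 0 < p) (m : ℕ) :
    (Polynomial.expand ℤ p (Polynomial.cyclotomic n ℤ) * Rpoly n).coeff m =
      ∑ i ∈ Finset.range (n + 1), if i * p ≤ m then
        (Polynomial.cyclotomic n ℤ).coeff i * (Rpoly n).coeff (m - i * p) else 0 := by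
  rw [coeff_mul, Finset.Nat.sum_antidiagonal_eq_sum_range_succ_mk]
  have hF : ∀ k ∈ Finset.range (m + 1),
      (Polynomial.expand ℤ p (Polynomial.cyclotomic n ℤ)).coeff k * (Rpoly n).coeff (m - k)
      = if p ∣ k then (Polynomial.cyclotomic n ℤ).coeff (k / p) * (Rpoly n).coeff (m - k) else 0 := by
    intro k _
    rw [Polynomial.coeff_expand hp]
    split_ifs <;> simp
  rw [Finset.sum_congr rfl hF]
  -- restrict to image of multiples of p with quotient ≤ n
  have key : ∑ k ∈ Finset.range (m + 1),
      (if p ∣ k then (Polynomial.cyclotomic n ℤ).coeff (k / p) * (Rpoly n).coeff (m - k) else 0)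
      = ∑ i ∈ (Finset.range (n + 1)).filter (fun i => i * p ≤ m),
          (Polynomial.cyclotomic n ℤ).coeff i * (Rpoly n).coeff (m - i * p) := by
    set S := (Finset.range (n + 1)).filter (fun i => i * p ≤ m) with hS
    have hinj : ∀ x ∈ S, ∀ y ∈ S, x * p = y * p → x = y := by
      intro x _ y _ h
      exact Nat.eq_of_mul_eq_mul_right hp h
    have himg := Finset.sum_image (s := S) (g := fun i => i * p)
      (f := fun k => if p ∣ k then
        (Polynomial.cyclotomic n ℤ).coeff (k / p) * (Rpoly n).coeff (m - k) else 0) hinj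
    have hsub : S.image (fun i => i * p) ⊆ Finset.range (m + 1) := by
      intro k hk
      simp only [Finset.mem_image, Finset.mem_filter, Finset.mem_range, hS] at hk ⊢
      obtain ⟨i, ⟨_, hip⟩, rfl⟩ := hk
      omega
    have hzero : ∀ k ∈ Finset.range (m + 1), k ∉ S.image (fun i => i * p) →
        (if p ∣ k then (Polynomial.cyclotomic n ℤ).coeff (k / p) * (Rpoly n).coeff (m - k) else 0)
        = 0 := by
      intro k hk hk'
      simp only [Finset.mem_image, Finset.mem_filter, Finset.mem_range, hS] at hk hk'
      split_ifs with hd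
      · obtain ⟨i, rfl⟩ := hd
        rw [Nat.mul_div_cancel_left i hp]
        by_cases hi : i ≤ n
        · exact absurd ⟨i, ⟨by omega, by rw [mul_comm]; omega⟩, mul_comm i p⟩ hk'
        · rw [coeff_cyclo_gt n (by omega), zero_mul]
      · rfl
    rw [← Finset.sum_subset hsub hzero, himg]
    apply Finset.sum_congr rfl
    intro i hi
    have hd : p ∣ i * p := dvd_mul_left p i
    simp [hd, Nat.mul_div_cancel i hp]
  rw [key, Finset.sum_filter]

lemma coeff_formula (n p : ℕ) (hn : 0 < n) (hp : p.Prime) (hnp : n < p) (m : ℕ) :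
    (Polynomial.cyclotomic (n * p) ℤ).coeff m =
      -∑ i ∈ Finset.range (n + 1), if i * p ≤ m then
        (Polynomial.cyclotomic n ℤ).coeff i * (Rpoly n).coeff ((m - i * p) % n) else 0 := by
  have hpn : ¬ p ∣ n := fun h => absurd (Nat.le_of_dvd hn h) (by omega)
  have hE : Polynomial.cyclotomic (n * p) ℤ * X ^ n - Polynomial.cyclotomic (n * p) ℤ
      = Polynomial.expand ℤ p (Polynomial.cyclotomic n ℤ) * Rpoly n := by
    rw [cyclotomic_expand_eq_cyclotomic_mul hp hpn, mul_assoc, cyclo_mul_Rpoly n]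
    ring
  induction m using Nat.strong_induction_on with
  | _ m ih =>
    have hrec : (Polynomial.cyclotomic (n * p) ℤ).coeff m =
        (if n ≤ m then (Polynomial.cyclotomic (n * p) ℤ).coeff (m - n) else 0)
        - (Polynomial.expand ℤ p (Polynomial.cyclotomic n ℤ) * Rpoly n).coeff m := by
      have := congrArg (fun q => Polynomial.coeff q m) hE
      simp only [coeff_sub, coeff_mul_X_pow'] at this
      omega
    rw [hrec, coeff_E n p hn hp.pos]
    by_cases hm : n ≤ m
    · rw [if_pos hm, ih (m - n) (by omega)]
      have : ∀ i ∈ Finset.range (n + 1),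
          ((if i * p ≤ m - n then (Polynomial.cyclotomic n ℤ).coeff i *
              (Rpoly n).coeff ((m - n - i * p) % n) else 0)
          + (if i * p ≤ m then (Polynomial.cyclotomic n ℤ).coeff i *
              (Rpoly n).coeff (m - i * p) else 0))
          = (if i * p ≤ m then (Polynomial.cyclotomic n ℤ).coeff i *
              (Rpoly n).coeff ((m - i * p) % n) else 0) := by
        intro i _
        split_ifs with h1 h2
        · have harg : (m - n - i * p) % n = (m - i * p) % n := by
            have : m - i * p = (m - n - i * p) + n := by omega
            rw [this, Nat.add_mod_right]
          rw [harg, Rpoly_coeff_ge n hn (l := m - i * p) (by omega), mul_zero, add_zero]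
        · omega
        · rw [Nat.mod_eq_of_lt (by omega), zero_add]
        · rw [add_zero]
      rw [← Finset.sum_congr rfl this, Finset.sum_add_distrib]
      ring
    · rw [if_neg hm, zero_sub, neg_inj]
      apply Finset.sum_congr rfl
      intro i _
      split_ifs with h1
      · rw [Nat.mod_eq_of_lt (by omega)]
      · rfl

lemma range_coeff_eq (n p : ℕ) (hn : 0 < n) (hp : p.Prime) (hnp : n < p) :
    Set.range (Polynomial.cyclotomic (n * p) ℤ).coeff =
      Set.range (fun uv : ℕ × ℕ => Gfun n (p % n) uv.1 uv.2) := by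
  have hcoeff : ∀ m : ℕ, (Polynomial.cyclotomic (n * p) ℤ).coeff m
      = Gfun n (p % n) (m / p) (m % p) := by
    intro m
    rw [coeff_formula n p hn hp hnp, Gfun, neg_inj]
    apply Finset.sum_congr rfl
    intro i _
    have hcond : i * p ≤ m ↔ i ≤ m / p := by
      rw [Nat.le_div_iff_mul_le hp.pos]
    simp only [hcond]
    split_ifs with h1
    · congr 1
      have hdm := Nat.div_add_mod' m p
      have h3 : (m / p - i) * p = m / p * p - i * p := by rw [Nat.sub_mul]
      have h4 : i * p ≤ m / p * p := Nat.mul_le_mul_right p (hcond.mp (hcond.mpr h1))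
      have harg : m - i * p = (m / p - i) * p + m % p := by omega
      rw [harg]
      exact congrArg (Rpoly n).coeff
        ((((Nat.mod_modEq p n).mul_left (m / p - i)).add_right (m % p)).symm)
    · rfl
  ext x
  constructor
  · rintro ⟨m, rfl⟩
    exact ⟨(m / p, m % p), (hcoeff m).symm⟩
  · rintro ⟨⟨u, v⟩, rfl⟩
    refine ⟨u * p + v % n, ?_⟩
    have hvn : v % n < p := lt_of_lt_of_le (Nat.mod_lt v hn) (le_of_lt hnp)
    have hdiv : (u * p + v % n) / p = u := by
      rw [add_comm, Nat.add_mul_div_right _ _ hp.pos, Nat.div_eq_of_lt hvn, zero_add]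
    have hmod : (u * p + v % n) % p = v % n := by
      rw [add_comm, Nat.add_mul_mod_self_right, Nat.mod_eq_of_lt hvn]
    rw [hcoeff, hdiv, hmod]
    show Gfun n (p % n) u (v % n) = Gfun n (p % n) u v
    rw [Gfun, Gfun, neg_inj]
    apply Finset.sum_congr rfl
    intro i _
    split_ifs with h1
    · congr 1
      exact congrArg (Rpoly n).coeff ((Nat.mod_modEq v n).add_left ((u - i) * (p % n)))
    · rfl

theorem cyclotomic_periodicity (n s t : ℕ) (hn : 0 < n)
    (hs : s.Prime) (ht : t.Prime) (hns : n < s) (hst : s < t)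
    (hmod : s ≡ t [MOD n]) :
    Set.range (Polynomial.cyclotomic (n * s) ℤ).coeff =
      Set.range (Polynomial.cyclotomic (n * t) ℤ).coeff := by
  rw [range_coeff_eq n s hn hs hns, range_coeff_eq n t hn ht (by omega), hmod]
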